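/- For every ε ∈ (0,1) there exists m₀ such that for all m ≥ m₀ and all n with 1 ≤ n ≤ m, the probability that the random bipartite graph G_{n,m,1/2} contains a matching covering every vertex of V₁ satisfies 1 − 2^{−(1−ε)m} ≤ P(complete matching from V₁ to V₂ exists) ≤ 1 − 2^{−m}. -/

import Mathlib

open Finset

open scoped Classical

noncomputable section

lemma pow12_le_two_pow : ∀ m : ℕ, 128 ≤ m → m ^ 12 ≤ 2 ^ m := by
  intro m hm
  induction m with
  | zero => omega
  | succ k ih =>
    rcases Nat.lt_or_ge k 128 with hk | hk
    · have hk' : k = 127 := by omega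
      subst hk'
      norm_num
    · have h1 : (k + 1) ^ 12 ≤ 2 * k ^ 12 := by
        have h2 : 128 * (k + 1) ≤ 129 * k := by omega
        have h3 : (128 * (k + 1)) ^ 12 ≤ (129 * k) ^ 12 := Nat.pow_le_pow_left h2 _
        have h4 : (129 : ℕ) ^ 12 ≤ 2 * 128 ^ 12 := by norm_num
        nlinarith [Nat.pow_le_pow_left h2 12, pow_pos (show 0 < k by omega) 12]
      calc (k + 1) ^ 12 ≤ 2 * k ^ 12 := h1
        _ ≤ 2 * 2 ^ k := by have := ih hk; omega
        _ = 2 ^ (k + 1) := by ring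


lemma key_j (m j : ℕ) (hm : 128 ≤ m) (hj : 1 ≤ j) (hjm : 2 * j ≤ m + 1) :
    m ^ j * m ^ j * 2 ^ m ≤ m ^ 5 * 2 ^ (j * (m + 1 - j)) := by
  have hm1 : 1 ≤ m := by omega
  rcases Nat.lt_or_ge j 3 with hj3 | hj3
  · interval_cases j
    · -- j = 1
      have : m ^ 1 * m ^ 1 ≤ m ^ 5 := by
        calc m ^ 1 * m ^ 1 = m ^ 2 := by ring
          _ ≤ m ^ 5 := Nat.pow_le_pow_right hm1 (by norm_num)
      have h2 : (1 : ℕ) * (m + 1 - 1) = m := by omega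
      rw [h2]
      exact Nat.mul_le_mul_right _ this
    · -- j = 2
      have h2 : (2 : ℕ) * (m + 1 - 2) = 2 * m - 2 := by omega
      rw [h2]
      have ha : m ^ 2 * m ^ 2 ≤ m ^ 5 := by
        calc m ^ 2 * m ^ 2 = m ^ 4 := by ring
          _ ≤ m ^ 5 := Nat.pow_le_pow_right hm1 (by norm_num)
      have hb : 2 ^ m ≤ 2 ^ (2 * m - 2) := Nat.pow_le_pow_right (by norm_num) (by omega)
      exact Nat.mul_le_mul ha hb
  · -- j ≥ 3
    have hkey : m ^ j * m ^ j * 2 ^ m ≤ 2 ^ (j * (m + 1 - j)) := by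
      have hsq : (m ^ j * m ^ j * 2 ^ m) ^ 2 ≤ (2 ^ (j * (m + 1 - j))) ^ 2 := by
        have e1 : (m ^ j * m ^ j * 2 ^ m) ^ 2 = m ^ (4 * j) * 2 ^ (2 * m) := by
          ring
        have h4j : m ^ (4 * j) ≤ 2 ^ ((j - 2) * m) := by
          calc m ^ (4 * j) ≤ m ^ (12 * (j - 2)) :=
                Nat.pow_le_pow_right hm1 (by omega)
            _ = (m ^ 12) ^ (j - 2) := by rw [← pow_mul]
            _ ≤ (2 ^ m) ^ (j - 2) := Nat.pow_le_pow_left (pow12_le_two_pow m hm) _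
            _ = 2 ^ (m * (j - 2)) := by rw [← pow_mul]
            _ = 2 ^ ((j - 2) * m) := by rw [Nat.mul_comm]
        have e2 : (j - 2) * m + 2 * m = j * m := by
          have h := Nat.sub_mul j 2 m
          have h2m : 2 * m ≤ j * m := Nat.mul_le_mul_right m (by omega)
          omega
        have h5 : m ^ (4 * j) * 2 ^ (2 * m) ≤ 2 ^ (j * m) := by
          calc m ^ (4 * j) * 2 ^ (2 * m) ≤ 2 ^ ((j - 2) * m) * 2 ^ (2 * m) :=
                Nat.mul_le_mul_right _ h4j
            _ = 2 ^ ((j - 2) * m + 2 * m) := by rw [← pow_add]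
            _ = 2 ^ (j * m) := by rw [e2]
        have h6 : j * m ≤ 2 * (j * (m + 1 - j)) := by
          have h7 : m + 1 ≤ 2 * (m + 1 - j) := by omega
          calc j * m ≤ j * (m + 1) := by nlinarith
            _ ≤ j * (2 * (m + 1 - j)) := Nat.mul_le_mul_left _ h7
            _ = 2 * (j * (m + 1 - j)) := by ring
        calc (m ^ j * m ^ j * 2 ^ m) ^ 2 = m ^ (4 * j) * 2 ^ (2 * m) := e1
          _ ≤ 2 ^ (j * m) := h5
          _ ≤ 2 ^ (2 * (j * (m + 1 - j))) := Nat.pow_le_pow_right (by norm_num) h6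
          _ = (2 ^ (j * (m + 1 - j))) ^ 2 := by rw [← pow_mul, Nat.mul_comm]
      exact (Nat.pow_le_pow_iff_left (by norm_num)).mp hsq
    calc m ^ j * m ^ j * 2 ^ m ≤ 2 ^ (j * (m + 1 - j)) := hkey
      _ ≤ m ^ 5 * 2 ^ (j * (m + 1 - j)) := Nat.le_mul_of_pos_left _ (by positivity)


open Finset

open scoped Classical

lemma good_card_le (n m : ℕ) (hn : 1 ≤ n) :
    ((Finset.univ.filter fun E : Finset (Fin n × Fin m) =>
        ∃ f : Fin n → Fin m, Function.Injective f ∧ ∀ a : Fin n, (a, f a) ∈ E).card)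
      + 2 ^ ((n - 1) * m) ≤ 2 ^ (n * m) := by
  set z : Fin n := ⟨0, hn⟩ with hz
  set T : Finset (Finset (Fin n × Fin m)) :=
    (Finset.univ.filter fun p : Fin n × Fin m => p.1 ≠ z).powerset with hT
  have hTcard : T.card = 2 ^ ((n - 1) * m) := by
    rw [hT, card_powerset]
    congr 1
    have : (Finset.univ.filter fun p : Fin n × Fin m => p.1 ≠ z) = ({z}ᶜ ×ˢ univ) := by
      ext ⟨a, b⟩
      simp
    rw [this, card_product, card_compl]
    simp
  have hdisj : Disjoint (Finset.univ.filter fun E : Finset (Fin n × Fin m) =>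
      ∃ f : Fin n → Fin m, Function.Injective f ∧ ∀ a : Fin n, (a, f a) ∈ E) T := by
    rw [Finset.disjoint_left]
    rintro E hE hET
    rw [mem_filter] at hE
    obtain ⟨-, f, hf, hfE⟩ := hE
    rw [hT, mem_powerset] at hET
    have := hET (hfE z)
    simp at this
  calc _ = ((Finset.univ.filter fun E : Finset (Fin n × Fin m) =>
        ∃ f : Fin n → Fin m, Function.Injective f ∧ ∀ a : Fin n, (a, f a) ∈ E) ∪ T).card := by
        rw [card_union_of_disjoint hdisj, hTcard]
    _ ≤ Fintype.card (Finset (Fin n × Fin m)) := by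
        rw [← card_univ]; exact card_le_card (subset_univ _)
    _ = 2 ^ (n * m) := by simp [Fintype.card_finset]


open Finset

open scoped Classical

lemma bad_card_le (n m : ℕ) (hn : 1 ≤ n) (hnm : n ≤ m) :
    ((Finset.univ.filter fun E : Finset (Fin n × Fin m) =>
        ¬ ∃ f : Fin n → Fin m, Function.Injective f ∧ ∀ a : Fin n, (a, f a) ∈ E).card)
      ≤ ∑ k ∈ Finset.Icc 1 n,
          n.choose k * m.choose (k - 1) * 2 ^ (k * (k - 1) + (n - k) * m) := by
  set F : Finset (Fin n) × Finset (Fin m) → Finset (Finset (Fin n × Fin m)) :=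
    fun q => ((q.1 ×ˢ q.2) ∪ ((q.1ᶜ) ×ˢ univ)).powerset with hF
  have hsub : (Finset.univ.filter fun E : Finset (Fin n × Fin m) =>
        ¬ ∃ f : Fin n → Fin m, Function.Injective f ∧ ∀ a : Fin n, (a, f a) ∈ E)
      ⊆ (Finset.Icc 1 n).biUnion fun k =>
          ((powersetCard k (univ : Finset (Fin n))) ×ˢ
            (powersetCard (k - 1) (univ : Finset (Fin m)))).biUnion F := by
    intro E hE
    rw [mem_filter] at hE
    obtain ⟨-, hE⟩ := hE
    set t : Fin n → Finset (Fin m) := fun a => univ.filter fun b => (a, b) ∈ E with ht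
    have hhall : ¬ ∀ s : Finset (Fin n), s.card ≤ (s.biUnion t).card := by
      intro h
      obtain ⟨f, hf, hft⟩ := (Finset.all_card_le_biUnion_card_iff_existsInjective' t).mp h
      exact hE ⟨f, hf, fun a => by simpa [ht] using hft a⟩
    push_neg at hhall
    obtain ⟨A, hA⟩ := hhall
    have hA1 : 1 ≤ A.card := by omega
    have hAn : A.card ≤ n := by
      simpa using card_le_card (subset_univ A)
    obtain ⟨B, hB1, -, hBcard⟩ :=
      exists_subsuperset_card_eq (n := A.card - 1) (subset_univ (A.biUnion t)) (by omega)
        (by simpa using Nat.le_trans (Nat.sub_le _ _) (hAn.trans hnm))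
    refine mem_biUnion.mpr ⟨A.card, by rw [Finset.mem_Icc]; exact ⟨hA1, hAn⟩, mem_biUnion.mpr
      ⟨(A, B), ?_, ?_⟩⟩
    · rw [mem_product]
      exact ⟨mem_powersetCard.mpr ⟨subset_univ _, rfl⟩,
        mem_powersetCard.mpr ⟨subset_univ _, hBcard⟩⟩
    · rw [hF, mem_powerset]
      rintro ⟨a, b⟩ hab
      by_cases haA : a ∈ A
      · refine mem_union_left _ (mem_product.mpr ⟨haA, hB1 ?_⟩)
        exact mem_biUnion.mpr ⟨a, haA, by simp [ht, hab]⟩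
      · exact mem_union_right _ (mem_product.mpr ⟨by simpa using haA, mem_univ _⟩)
  calc _ ≤ _ := card_le_card hsub
    _ ≤ ∑ k ∈ Finset.Icc 1 n,
          (((powersetCard k (univ : Finset (Fin n))) ×ˢ
            (powersetCard (k - 1) (univ : Finset (Fin m)))).biUnion F).card :=
        card_biUnion_le
    _ ≤ ∑ k ∈ Finset.Icc 1 n,
          n.choose k * m.choose (k - 1) * 2 ^ (k * (k - 1) + (n - k) * m) := by
        refine Finset.sum_le_sum fun k hk => ?_
        rw [Finset.mem_Icc] at hk
        calc _ ≤ ∑ q ∈ (powersetCard k (univ : Finset (Fin n))) ×ˢ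
                  (powersetCard (k - 1) (univ : Finset (Fin m))), (F q).card :=
              card_biUnion_le
          _ = ∑ q ∈ (powersetCard k (univ : Finset (Fin n))) ×ˢ
                  (powersetCard (k - 1) (univ : Finset (Fin m))),
                2 ^ (k * (k - 1) + (n - k) * m) := by
              refine Finset.sum_congr rfl fun q hq => ?_
              rw [mem_product, mem_powersetCard, mem_powersetCard] at hq
              obtain ⟨⟨-, hq1⟩, ⟨-, hq2⟩⟩ := hq
              rw [hF]
              simp only [card_powerset]
              congr 1
              have hdisj : Disjoint (q.1 ×ˢ q.2) ((q.1ᶜ) ×ˢ (univ : Finset (Fin m))) := by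
                rw [Finset.disjoint_left]
                rintro ⟨a, b⟩ hab hab'
                rw [mem_product] at hab hab'
                simp only [Finset.mem_compl] at hab'
                exact hab'.1 hab.1
              rw [card_union_of_disjoint hdisj, card_product, card_product, hq1, hq2,
                card_compl]
              simp [hq1]
          _ = _ := by
              rw [Finset.sum_const, card_product, card_powersetCard, card_powersetCard]
              simp [Nat.mul_assoc]


lemma key_k (m n k : ℕ) (hm : 128 ≤ m) (hk : 1 ≤ k) (hkn : k ≤ n) (hnm : n ≤ m) :
    n.choose k * m.choose (k - 1) * 2 ^ m ≤ m ^ 5 * 2 ^ (k * (m + 1 - k)) := by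
  have hm1 : 1 ≤ m := by omega
  set j := min k (m + 1 - k) with hj
  have hj1 : 1 ≤ j := by omega
  have hjm : 2 * j ≤ m + 1 := by omega
  have h1 : n.choose k ≤ m ^ j := by
    have hnk : n.choose k ≤ m.choose k := Nat.choose_le_choose k hnm
    rcases le_total k (m - k) with h | h
    · calc n.choose k ≤ m.choose k := hnk
        _ ≤ m ^ k := Nat.choose_le_pow _ _
        _ ≤ m ^ j := Nat.pow_le_pow_right hm1 (by omega)
    · calc n.choose k ≤ m.choose k := hnk
        _ = m.choose (m - k) := (Nat.choose_symm (by omega)).symm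
        _ ≤ m ^ (m - k) := Nat.choose_le_pow _ _
        _ ≤ m ^ j := Nat.pow_le_pow_right hm1 (by omega)
  have h2 : m.choose (k - 1) ≤ m ^ j := by
    rcases le_total (k - 1) (m - (k - 1)) with h | h
    · calc m.choose (k - 1) ≤ m ^ (k - 1) := Nat.choose_le_pow _ _
        _ ≤ m ^ j := Nat.pow_le_pow_right hm1 (by omega)
    · calc m.choose (k - 1) = m.choose (m - (k - 1)) := (Nat.choose_symm (by omega)).symm
        _ ≤ m ^ (m - (k - 1)) := Nat.choose_le_pow _ _
        _ ≤ m ^ j := Nat.pow_le_pow_right hm1 (by omega)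
  have hprod : k * (m + 1 - k) = j * (m + 1 - j) := by
    rcases le_total k (m + 1 - k) with h | h
    · rw [hj, min_eq_left h]
    · rw [hj, min_eq_right h]
      have h2 : m + 1 - (m + 1 - k) = k := by omega
      rw [h2, Nat.mul_comm]
  calc n.choose k * m.choose (k - 1) * 2 ^ m ≤ m ^ j * m ^ j * 2 ^ m := by
        exact Nat.mul_le_mul_right _ (Nat.mul_le_mul h1 h2)
    _ ≤ m ^ 5 * 2 ^ (j * (m + 1 - j)) := key_j m j hm hj1 hjm
    _ = m ^ 5 * 2 ^ (k * (m + 1 - k)) := by rw [hprod]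

lemma term_le (m n k : ℕ) (hm : 128 ≤ m) (hk : 1 ≤ k) (hkn : k ≤ n) (hnm : n ≤ m) :
    n.choose k * m.choose (k - 1) * 2 ^ (k * (k - 1) + (n - k) * m)
      ≤ m ^ 5 * 2 ^ (n * m - m) := by
  have hmnm : m ≤ n * m := by nlinarith
  have hexp : k * (k - 1) + (n - k) * m + k * (m + 1 - k) = n * m := by
    obtain ⟨c, rfl⟩ : ∃ c, k = c + 1 := ⟨k - 1, by omega⟩
    obtain ⟨a, rfl⟩ : ∃ a, n = (c + 1) + a := ⟨n - (c + 1), by omega⟩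
    obtain ⟨b, rfl⟩ : ∃ b, m = (c + 1) + b := ⟨m - (c + 1), by omega⟩
    simp only [Nat.add_sub_cancel_left, Nat.add_sub_cancel]
    have e1 : c + 1 + a - (c + 1) = a := by omega
    have e2 : c + 1 + b + 1 - (c + 1) = b + 1 := by omega
    have e3 : c + 1 - 1 = c := by omega
    rw [e2]
    ring
  have key := key_k m n k hm hk hkn hnm
  have e5 : (n * m - m) + m = k * (m + 1 - k) + (k * (k - 1) + (n - k) * m) := by omega
  have h2 : (n.choose k * m.choose (k - 1) * 2 ^ (k * (k - 1) + (n - k) * m)) * 2 ^ m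
      ≤ (m ^ 5 * 2 ^ (n * m - m)) * 2 ^ m := by
    calc (n.choose k * m.choose (k - 1) * 2 ^ (k * (k - 1) + (n - k) * m)) * 2 ^ m
        = (n.choose k * m.choose (k - 1) * 2 ^ m) * 2 ^ (k * (k - 1) + (n - k) * m) := by
          ring
      _ ≤ (m ^ 5 * 2 ^ (k * (m + 1 - k))) * 2 ^ (k * (k - 1) + (n - k) * m) :=
          Nat.mul_le_mul_right _ key
      _ = m ^ 5 * 2 ^ (k * (m + 1 - k) + (k * (k - 1) + (n - k) * m)) := by
          rw [Nat.mul_assoc, ← pow_add]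
      _ = (m ^ 5 * 2 ^ (n * m - m)) * 2 ^ m := by
          rw [← e5, pow_add, ← Nat.mul_assoc]
  exact Nat.le_of_mul_le_mul_right h2 (by positivity)


lemma exists_m0 (ε : ℝ) (hε : 0 < ε) :
    ∃ M : ℕ, ∀ m : ℕ, M ≤ m → ((m : ℝ)) ^ 6 ≤ (2 : ℝ) ^ (ε * m) := by
  set c := ε * Real.log 2 with hc
  have hc0 : 0 < c := mul_pos hε (Real.log_pos one_lt_two)
  refine ⟨⌈(12 / c) ^ 2⌉₊ + 1, fun m hm => ?_⟩
  have hm1 : 1 ≤ m := by omega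
  have hm0 : (1 : ℝ) ≤ (m : ℝ) := by exact_mod_cast hm1
  have hmge : (12 / c) ^ 2 ≤ (m : ℝ) := by
    calc (12 / c) ^ 2 ≤ (⌈(12 / c) ^ 2⌉₊ : ℝ) := Nat.le_ceil _
      _ ≤ (m : ℝ) := by exact_mod_cast Nat.le_of_succ_le hm
  have hsq : 12 / c ≤ Real.sqrt m := by
    rw [show (12 / c : ℝ) = Real.sqrt ((12 / c) ^ 2) from (Real.sqrt_sq (by positivity)).symm]
    exact Real.sqrt_le_sqrt hmge
  have hsqrt_pos : 0 < Real.sqrt m := Real.sqrt_pos.mpr (by linarith)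
  have hlog : Real.log m ≤ 2 * Real.sqrt m := by
    have h1 : Real.log (Real.sqrt m) = Real.log m / 2 := Real.log_sqrt (by linarith)
    have h2 : Real.log (Real.sqrt m) ≤ Real.sqrt m - 1 :=
      Real.log_le_sub_one_of_pos hsqrt_pos
    linarith
  have h12 : 12 ≤ c * Real.sqrt m := by
    rw [div_le_iff₀ hc0] at hsq
    linarith [mul_comm c (Real.sqrt m)]
  have hms : (m : ℝ) = Real.sqrt m * Real.sqrt m := (Real.mul_self_sqrt (by linarith)).symm
  have h6 : 6 * Real.log m ≤ c * m := by
    have : 12 * Real.sqrt m ≤ c * m := by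
      calc 12 * Real.sqrt m ≤ (c * Real.sqrt m) * Real.sqrt m :=
            mul_le_mul_of_nonneg_right h12 hsqrt_pos.le
        _ = c * m := by rw [mul_assoc, ← hms]
    linarith
  have hm6 : ((m : ℝ)) ^ 6 = Real.exp (6 * Real.log m) := by
    rw [show (6 : ℝ) * Real.log m = Real.log ((m : ℝ) ^ (6 : ℕ)) by
      rw [Real.log_pow]; push_cast; ring]
    rw [Real.exp_log (by positivity)]
  rw [hm6, Real.rpow_def_of_pos (by norm_num : (0:ℝ) < 2)]
  apply Real.exp_le_exp.mpr
  calc 6 * Real.log m ≤ c * m := h6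
    _ = Real.log 2 * (ε * m) := by rw [hc]; ring


/-- the probability that the random bipartite graph `G_{n,m,1/2}` contains a complete
matching from `V₁` (of size `n`) to `V₂` (of size `m`) -/
def completeMatchingProb (n m : ℕ) : ℝ :=
  (Nat.card {E : Finset (Fin n × Fin m) //
      ∃ f : Fin n → Fin m, Function.Injective f ∧ ∀ a : Fin n, (a, f a) ∈ E} : ℝ) /
    (2 : ℝ) ^ (n * m)

/-- For `1 ≤ n ≤ m`, the random bipartite graph `G_{n,m,1/2}` contains a complete
matching from `V₁` to `V₂` with probability `1 − 2^{−m(1+o(1))}`. -/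
theorem bip_complete_matching_prob :
    ∀ ε : ℝ, 0 < ε → ε < 1 → ∃ m₀ : ℕ, ∀ m : ℕ, m₀ ≤ m → ∀ n : ℕ, 1 ≤ n → n ≤ m →
      1 - (2 : ℝ) ^ (-(1 - ε) * m) ≤ completeMatchingProb n m ∧
        completeMatchingProb n m ≤ 1 - (2 : ℝ) ^ (-(m : ℝ)) := by
  intro ε hε hε1
  obtain ⟨M, hM⟩ := exists_m0 ε hε
  refine ⟨M + 128, fun m hm n hn hnm => ?_⟩
  have hm128 : 128 ≤ m := by omega
  have hmM : M ≤ m := by omega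
  have hm1 : 1 ≤ m := by omega
  -- notation
  set g := ((Finset.univ.filter fun E : Finset (Fin n × Fin m) =>
      ∃ f : Fin n → Fin m, Function.Injective f ∧ ∀ a : Fin n, (a, f a) ∈ E).card) with hg
  set b := ((Finset.univ.filter fun E : Finset (Fin n × Fin m) =>
      ¬ ∃ f : Fin n → Fin m, Function.Injective f ∧ ∀ a : Fin n, (a, f a) ∈ E).card) with hb
  have htot : g + b = 2 ^ (n * m) := by
    rw [hg, hb, Finset.card_filter_add_card_filter_not, card_univ]
    simp [Fintype.card_finset]
  have hprob : completeMatchingProb n m = (g : ℝ) / (2 : ℝ) ^ (n * m) := by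
    rw [completeMatchingProb, Nat.card_eq_fintype_card, Fintype.card_subtype, hg]
  have hpos : (0 : ℝ) < (2 : ℝ) ^ (n * m) := by positivity
  -- numeric helpers
  have hmnm : m ≤ n * m := by nlinarith
  constructor
  · -- lower bound
    have hbad : b ≤ m ^ 6 * 2 ^ (n * m - m) := by
      calc b ≤ ∑ k ∈ Finset.Icc 1 n,
            n.choose k * m.choose (k - 1) * 2 ^ (k * (k - 1) + (n - k) * m) :=
            bad_card_le n m hn hnm
        _ ≤ ∑ _k ∈ Finset.Icc 1 n, m ^ 5 * 2 ^ (n * m - m) := by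
            refine Finset.sum_le_sum fun k hk => ?_
            rw [Finset.mem_Icc] at hk
            exact term_le m n k hm128 hk.1 hk.2 hnm
        _ = n * (m ^ 5 * 2 ^ (n * m - m)) := by
            rw [Finset.sum_const, Nat.card_Icc]
            simp
        _ ≤ m ^ 6 * 2 ^ (n * m - m) := by
            have : n * m ^ 5 ≤ m ^ 6 := by
              calc n * m ^ 5 ≤ m * m ^ 5 := Nat.mul_le_mul_right _ hnm
                _ = m ^ 6 := by ring
            calc n * (m ^ 5 * 2 ^ (n * m - m)) = (n * m ^ 5) * 2 ^ (n * m - m) := by ring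
              _ ≤ m ^ 6 * 2 ^ (n * m - m) := Nat.mul_le_mul_right _ this
    -- to reals
    have hgreal : ((2 : ℝ) ^ (n * m) - (m : ℝ) ^ 6 * 2 ^ (n * m - m)) ≤ (g : ℝ) := by
      have h1 : (g : ℝ) + b = (2 : ℝ) ^ (n * m) := by exact_mod_cast htot
      have h2 : (b : ℝ) ≤ (m : ℝ) ^ 6 * 2 ^ (n * m - m) := by exact_mod_cast hbad
      linarith
    have hsub : (2 : ℝ) ^ (n * m - m) * (2 : ℝ) ^ m = (2 : ℝ) ^ (n * m) := by
      rw [← pow_add, Nat.sub_add_cancel hmnm]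
    have h2m : ((2 : ℝ) ^ m)⁻¹ = (2 : ℝ) ^ (-(m : ℝ)) := by
      rw [← Real.rpow_natCast 2 m, ← Real.rpow_neg (by norm_num)]
    have hfrac : ((m : ℝ) ^ 6 * 2 ^ (n * m - m)) / (2 : ℝ) ^ (n * m)
        = (m : ℝ) ^ 6 * (2 : ℝ) ^ (-(m : ℝ)) := by
      rw [← hsub, ← h2m]
      have h2mne : (2 : ℝ) ^ m ≠ 0 := by positivity
      have h2nmne : (2 : ℝ) ^ (n * m - m) ≠ 0 := by positivity
      field_simp
    have hbound : ((m : ℝ) ^ 6) * (2 : ℝ) ^ (-(m : ℝ)) ≤ (2 : ℝ) ^ (-(1 - ε) * m) := by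
      have h1 : ((m : ℝ) ^ 6) * (2 : ℝ) ^ (-(m : ℝ)) ≤ (2 : ℝ) ^ (ε * m) * (2 : ℝ) ^ (-(m : ℝ)) :=
        mul_le_mul_of_nonneg_right (hM m hmM) (Real.rpow_nonneg (by norm_num) _)
      have h2 : (2 : ℝ) ^ (ε * m) * (2 : ℝ) ^ (-(m : ℝ)) = (2 : ℝ) ^ (-(1 - ε) * m) := by
        rw [← Real.rpow_add (by norm_num)]
        congr 1
        ring
      linarith
    rw [hprob]
    have hdiv : ((2 : ℝ) ^ (n * m) - (m : ℝ) ^ 6 * 2 ^ (n * m - m)) / (2 : ℝ) ^ (n * m)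
        ≤ (g : ℝ) / (2 : ℝ) ^ (n * m) := by
      exact div_le_div_of_nonneg_right hgreal hpos.le
    have heq : ((2 : ℝ) ^ (n * m) - (m : ℝ) ^ 6 * 2 ^ (n * m - m)) / (2 : ℝ) ^ (n * m)
        = 1 - ((m : ℝ) ^ 6 * 2 ^ (n * m - m)) / (2 : ℝ) ^ (n * m) := by
      field_simp
    calc 1 - (2 : ℝ) ^ (-(1 - ε) * m) ≤ 1 - ((m : ℝ) ^ 6) * (2 : ℝ) ^ (-(m : ℝ)) := by
          linarith
      _ = ((2 : ℝ) ^ (n * m) - (m : ℝ) ^ 6 * 2 ^ (n * m - m)) / (2 : ℝ) ^ (n * m) := by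
          rw [heq, hfrac]
      _ ≤ (g : ℝ) / (2 : ℝ) ^ (n * m) := hdiv
  · -- upper bound
    have hgle : (g : ℝ) ≤ (2 : ℝ) ^ (n * m) - (2 : ℝ) ^ ((n - 1) * m) := by
      have := good_card_le n m hn
      have h1 : (g : ℝ) + (2 : ℝ) ^ ((n - 1) * m) ≤ (2 : ℝ) ^ (n * m) := by
        exact_mod_cast this
      linarith
    have hfrac : (2 : ℝ) ^ ((n - 1) * m) / (2 : ℝ) ^ (n * m) = (2 : ℝ) ^ (-(m : ℝ)) := by
      rw [div_eq_iff (ne_of_gt hpos), ← Real.rpow_natCast 2 ((n-1)*m),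
        ← Real.rpow_natCast 2 (n*m), ← Real.rpow_add (by norm_num)]
      congr 1
      have : (n - 1) * m + m = n * m := by
        cases n with
        | zero => omega
        | succ k => simp [Nat.succ_sub_one]; ring
      push_cast [← this]
      ring
    rw [hprob]
    rw [div_le_iff₀ hpos]
    have : (1 - (2 : ℝ) ^ (-(m : ℝ))) * (2 : ℝ) ^ (n * m)
        = (2 : ℝ) ^ (n * m) - (2 : ℝ) ^ ((n - 1) * m) := by
      rw [sub_mul, one_mul, ← hfrac]
      field_simp
    rw [this]
    exact hgle
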